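/- Let F be a finite loop, p a prime, d ≥ 1, z ∈ Z_p(F)\{1}, and (α,β,τ) ∈ Aut*(F,F_p^d). Then the image of the subspace C(F,p^d,z) under the action of (α,β,τ) equals C(F,p^d,z^α). In particular, the subgroup Aut*(F,p^d,z) = {(α,β,τ) ∈ Aut*(F,F_p^d) : ⟨z^α⟩ = ⟨z⟩} acts on C(F,p^d,z). -/
import Mathlib


universe u v

/-- A loop: a set with binary operation, two-sided identity, and bijective translations. -/
class Loop (Q : Type u) extends Mul Q, One Q where
  one_mul : ∀ x : Q, 1 * x = x
  mul_one : ∀ x : Q, x * 1 = x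
  mulLeft_bij : ∀ x : Q, Function.Bijective (fun y : Q => x * y)
  mulRight_bij : ∀ x : Q, Function.Bijective (fun y : Q => y * x)

/-- `z` commutes and associates (in all three positions) with all elements,
with respect to the binary operation `mul`. -/
def IsCentral {Q : Type u} (mul : Q → Q → Q) (z : Q) : Prop :=
  (∀ x, mul z x = mul x z) ∧
  (∀ x y, mul z (mul x y) = mul (mul z x) y) ∧
  (∀ x y, mul x (mul z y) = mul (mul x z) y) ∧
  (∀ x y, mul x (mul y z) = mul (mul x y) z)

/-- Normalized cocycle: θ(1,x) = θ(x,1) = 0. -/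
def IsCocycle {F : Type u} {A : Type v} [One F] [AddCommGroup A]
    (θ : F → F → A) : Prop :=
  ∀ x : F, θ 1 x = 0 ∧ θ x 1 = 0

/-- Multiplication of the central extension X(F,A,θ) on F × A. -/
def cmul {F : Type u} {A : Type v} [Mul F] [AddCommGroup A]
    (θ : F → F → A) (p q : F × A) : F × A :=
  (p.1 * q.1, p.2 + q.2 + θ p.1 q.1)

/-- Left-normed powers: `lpow mul z n` is z^(n+1). -/
def lpow {Q : Type u} (mul : Q → Q → Q) (z : Q) : ℕ → Q
  | 0 => z
  | n + 1 => mul (lpow mul z n) z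

/-- Coboundary of τ. -/
def coboundary {F : Type u} {A : Type v} [Mul F] [AddCommGroup A]
    (τ : F → A) : F → F → A :=
  fun x y => τ (x * y) - τ x - τ y

/-- The affine automorphism group Aut*(F,A): triples (α,β,τ). -/
structure AutStar (F : Type u) (A : Type v) [Mul F] [One F] [AddCommGroup A] where
  α : F ≃ F
  mapMul : ∀ x y : F, α (x * y) = α x * α y
  mapOne : α 1 = 1
  β : A ≃+ A
  τ : F → A
  τone : τ 1 = 0

namespace AutStar

variable {F : Type u} {A : Type v} [Mul F] [One F] [AddCommGroup A]

/-- Multiplication (α,β,τ)(α',β',τ') = (αα', ββ', ατ' + τβ'). -/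
def mul (g h : AutStar F A) : AutStar F A where
  α := g.α.trans h.α
  mapMul := fun x y => by
    simp only [Equiv.trans_apply, g.mapMul, h.mapMul]
  mapOne := by simp only [Equiv.trans_apply, g.mapOne, h.mapOne]
  β := g.β.trans h.β
  τ := fun x => h.τ (g.α x) + h.β (g.τ x)
  τone := by simp only [g.mapOne, h.τone, g.τone, map_zero, add_zero]

/-- The identity element of Aut*(F,A). -/
def one (F : Type u) (A : Type v) [Mul F] [One F] [AddCommGroup A] : AutStar F A where
  α := Equiv.refl F
  mapMul := fun _ _ => rfl
  mapOne := rfl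
  β := AddEquiv.refl A
  τ := fun _ => 0
  τone := rfl

end AutStar

/-- The affine action of (α,β,τ) on F × A. -/
def actP {F : Type u} {A : Type v} [Mul F] [One F] [AddCommGroup A]
    (p : F × A) (g : AutStar F A) : F × A :=
  (g.α p.1, g.β p.2 + g.τ p.1)

/-- The affine action of (α,β,τ) on cocycles. -/
def actC {F : Type u} {A : Type v} [Mul F] [One F] [AddCommGroup A]
    (θ : F → F → A) (g : AutStar F A) : F → F → A :=
  fun x y =>
    g.β (θ (g.α.symm x) (g.α.symm y)) + g.τ (g.α.symm (x * y))
      - g.τ (g.α.symm x) - g.τ (g.α.symm y)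

/-- The four centrality identities for θ relative to z. -/
def CentralConds {F : Type u} {A : Type v} [Mul F] [AddCommGroup A]
    (θ : F → F → A) (z : F) : Prop :=
  (∀ x : F, θ x z = θ z x) ∧
  (∀ x y : F, θ x y + θ (x * y) z = θ y z + θ x (y * z)) ∧
  (∀ x y : F, θ x z + θ (x * z) y = θ z y + θ x (z * y)) ∧
  (∀ x y : F, θ z x + θ (z * x) y = θ x y + θ z (x * y))

/-- Membership in C(F,p^d,z): normalized cocycle satisfying the centrality
identities for z together with θ(z,z)+θ(z²,z)+⋯+θ(z^{p−1},z) = 0. -/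
def InCz {F : Type u} [Mul F] [One F] (p d : ℕ)
    (θ : F → F → (Fin d → ZMod p)) (z : F) : Prop :=
  IsCocycle θ ∧ CentralConds θ z ∧
    ∑ i ∈ Finset.range (p - 1), θ (lpow (fun x y : F => x * y) z i) z = 0

/-- The cyclic subloop generated by z (left-normed powers together with 1). -/
def genSet {F : Type u} [Mul F] [One F] (z : F) : Set F :=
  insert (1 : F) {w : F | ∃ n : ℕ, lpow (fun x y : F => x * y) z n = w}

section Auxiliary

variable {Q : Type u} {F : Type u} {A : Type v}

lemma isCentral_mul {m : Q → Q → Q} {a b : Q} (ha : IsCentral m a) (hb : IsCentral m b) :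
    IsCentral m (m a b) := by
  obtain ⟨ac, a2, a3, a4⟩ := ha
  obtain ⟨bc, b2, b3, b4⟩ := hb
  refine ⟨fun x => ?_, fun x y => ?_, fun x y => ?_, fun x y => ?_⟩
  · calc m (m a b) x = m a (m b x) := (b3 a x).symm
      _ = m a (m x b) := by rw [bc]
      _ = m (m a x) b := b4 a x
      _ = m (m x a) b := by rw [ac]
      _ = m x (m a b) := (a3 x b).symm
  · calc m (m a b) (m x y) = m a (m b (m x y)) := (b3 a _).symm
      _ = m a (m (m b x) y) := by rw [b2]
      _ = m (m a (m b x)) y := a2 _ _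
      _ = m (m (m a b) x) y := by rw [b3]
  · calc m x (m (m a b) y) = m x (m a (m b y)) := by rw [← b3 a y]
      _ = m (m x a) (m b y) := a3 x (m b y)
      _ = m (m (m x a) b) y := b3 (m x a) y
      _ = m (m x (m a b)) y := by rw [a3 x b]
  · rw [a3 y b, a3 (m x y) b, b4 x (m y a), a4 x y]

lemma isCentral_lpow {m : Q → Q → Q} {c : Q} (hc : IsCentral m c) (n : ℕ) :
    IsCentral m (lpow m c n) := by
  induction n with
  | zero => exact hc
  | succ n ih => exact isCentral_mul ih hc

lemma lpow_add {m : Q → Q → Q} {c : Q} (hc : IsCentral m c) (a b : ℕ) :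
    m (lpow m c a) (lpow m c b) = lpow m c (a + b + 1) := by
  induction b with
  | zero => rfl
  | succ b ih =>
      show m (lpow m c a) (m (lpow m c b) c) = _
      rw [hc.2.2.2, ih]
      rfl

lemma lpow_lpow {m : Q → Q → Q} {c : Q} (hc : IsCentral m c) (k n : ℕ) :
    lpow m (lpow m c k) n = lpow m c (k * n + k + n) := by
  induction n with
  | zero => simp [lpow]
  | succ n ih =>
      show m (lpow m (lpow m c k) n) (lpow m c k) = _
      rw [ih, lpow_add hc]
      congr 1
      ring

lemma lpow_map {m : Q → Q → Q} (e : Q → Q) (he : ∀ x y, e (m x y) = m (e x) (e y))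
    (z : Q) (n : ℕ) : lpow m (e z) n = e (lpow m z n) := by
  induction n with
  | zero => rfl
  | succ n ih => show m (lpow m (e z) n) (e z) = _; rw [ih, ← he]; rfl

lemma isCentral_map [Mul F] (e : F ≃ F) (he : ∀ x y : F, e (x * y) = e x * e y)
    {z : F} (h : IsCentral (fun x y : F => x * y) z) :
    IsCentral (fun x y : F => x * y) (e z) := by
  have z1 : ∀ x : F, z * x = x * z := h.1
  have z2 : ∀ x y : F, z * (x * y) = (z * x) * y := h.2.1
  have z3 : ∀ x y : F, x * (z * y) = (x * z) * y := h.2.2.1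
  have z4 : ∀ x y : F, x * (y * z) = (x * y) * z := h.2.2.2
  refine ⟨fun x => ?_, fun x y => ?_, fun x y => ?_, fun x y => ?_⟩
  · show e z * x = x * e z
    rw [← e.apply_symm_apply x]
    simp only [← he]
    rw [z1]
  · show e z * (x * y) = (e z * x) * y
    rw [← e.apply_symm_apply x, ← e.apply_symm_apply y]
    simp only [← he]
    rw [z2]
  · show x * (e z * y) = (x * e z) * y
    rw [← e.apply_symm_apply x, ← e.apply_symm_apply y]
    simp only [← he]
    rw [z3]
  · show x * (y * e z) = (x * y) * e z
    rw [← e.apply_symm_apply x, ← e.apply_symm_apply y]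
    simp only [← he]
    rw [z4]

lemma p_smul_eq_zero (p d : ℕ) (v : Fin d → ZMod p) : p • v = 0 := by
  funext i
  simp only [Pi.smul_apply, Pi.zero_apply, nsmul_eq_mul, ZMod.natCast_self, zero_mul]

end Auxiliary

section Extension

variable {F : Type u} {A : Type v}

lemma centralConds_to_pair [Mul F] [CommRing A] {θ : F → F → A} {z : F}
    (hz : IsCentral (fun x y : F => x * y) z) (hcc : CentralConds θ z) :
    IsCentral (cmul θ) ((z, 0) : F × A) := by
  have z1 : ∀ x : F, z * x = x * z := hz.1
  have z2 : ∀ x y : F, z * (x * y) = (z * x) * y := hz.2.1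
  have z3 : ∀ x y : F, x * (z * y) = (x * z) * y := hz.2.2.1
  have z4 : ∀ x y : F, x * (y * z) = (x * y) * z := hz.2.2.2
  obtain ⟨c1, c2, c3, c4⟩ := hcc
  refine ⟨fun q => ?_, fun q r => ?_, fun q r => ?_, fun q r => ?_⟩
  · simp only [cmul, Prod.mk.injEq]
    exact ⟨z1 q.1, by linear_combination -c1 q.1⟩
  · simp only [cmul, Prod.mk.injEq]
    exact ⟨z2 q.1 r.1, by linear_combination -c4 q.1 r.1⟩
  · simp only [cmul, Prod.mk.injEq]
    exact ⟨z3 q.1 r.1, by linear_combination -c3 q.1 r.1⟩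
  · simp only [cmul, Prod.mk.injEq]
    exact ⟨z4 q.1 r.1, by linear_combination -c2 q.1 r.1⟩

lemma pair_to_centralConds [Mul F] [CommRing A] {θ : F → F → A} {z : F}
    (h : IsCentral (cmul θ) ((z, 0) : F × A)) : CentralConds θ z := by
  refine ⟨fun x => ?_, fun x y => ?_, fun x y => ?_, fun x y => ?_⟩
  · have := congrArg Prod.snd (h.1 (x, 0))
    simp only [cmul, zero_add, add_zero] at this
    exact this.symm
  · have := congrArg Prod.snd (h.2.2.2 (x, 0) (y, 0))
    simp only [cmul, zero_add, add_zero] at this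
    linear_combination -this
  · have := congrArg Prod.snd (h.2.2.1 (x, 0) (y, 0))
    simp only [cmul, zero_add, add_zero] at this
    linear_combination -this
  · have := congrArg Prod.snd (h.2.1 (x, 0) (y, 0))
    simp only [cmul, zero_add, add_zero] at this
    linear_combination -this

lemma one_pair_central [Loop F] [AddCommGroup A] {θ : F → F → A}
    (hθ : IsCocycle θ) (a : A) : IsCentral (cmul θ) ((1, a) : F × A) := by
  have h1 : ∀ x : F, θ 1 x = 0 := fun x => (hθ x).1
  have h2 : ∀ x : F, θ x 1 = 0 := fun x => (hθ x).2
  refine ⟨fun q => ?_, fun q r => ?_, fun q r => ?_, fun q r => ?_⟩ <;>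
    · simp only [cmul, Loop.one_mul, Loop.mul_one, h1, h2, Prod.mk.injEq, true_and,
        and_true]
      try abel

lemma lpow_cmul [Mul F] [CommRing A] (θ : F → F → A) (x : F) (a : A) (n : ℕ) :
    lpow (cmul θ) (x, a) n =
      (lpow (fun u v : F => u * v) x n,
        (n + 1) • a + ∑ i ∈ Finset.range n, θ (lpow (fun u v : F => u * v) x i) x) := by
  induction n with
  | zero => simp [lpow]
  | succ n ih =>
      show cmul θ (lpow (cmul θ) (x, a) n) (x, a) = _
      rw [ih]
      simp only [cmul, Prod.mk.injEq]
      refine ⟨rfl, ?_⟩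
      rw [Finset.sum_range_succ]
      simp only [nsmul_eq_mul]
      push_cast
      ring

end Extension


section Main

variable {F : Type u} {A : Type v}

lemma AutStar.symm_mul [Mul F] [One F] [AddCommGroup A] (g : AutStar F A) (x y : F) :
    g.α.symm (x * y) = g.α.symm x * g.α.symm y := by
  apply g.α.injective
  rw [g.mapMul]
  simp only [Equiv.apply_symm_apply]

lemma AutStar.symm_one [Mul F] [One F] [AddCommGroup A] (g : AutStar F A) :
    g.α.symm 1 = 1 := by
  apply g.α.injective
  rw [Equiv.apply_symm_apply, g.mapOne]

/-- The inverse of an element of Aut*(F,A). -/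
def AutStar.inv [Mul F] [One F] [AddCommGroup A] (g : AutStar F A) : AutStar F A where
  α := g.α.symm
  mapMul := g.symm_mul
  mapOne := g.symm_one
  β := g.β.symm
  τ := fun x => - g.β.symm (g.τ (g.α.symm x))
  τone := by simp only [g.symm_one, g.τone, map_zero, neg_zero]

lemma act_act_inv [Mul F] [One F] [AddCommGroup A] (g : AutStar F A)
    (θ : F → F → A) : actC (actC θ g.inv) g = θ := by
  funext x y
  simp only [actC, AutStar.inv, Equiv.symm_symm, Equiv.apply_symm_apply,
    Equiv.symm_apply_apply, g.symm_mul, map_add, map_sub, map_neg,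
    AddEquiv.apply_symm_apply]
  abel

lemma act_mem {F : Type u} [Loop F] (p d : ℕ) (hp : p.Prime) {z : F}
    (hzc : IsCentral (fun x y : F => x * y) z)
    (hzp : lpow (fun x y : F => x * y) z (p - 1) = 1)
    (g : AutStar F (Fin d → ZMod p)) {θ : F → F → (Fin d → ZMod p)}
    (hθ : InCz p d θ z) : InCz p d (actC θ g) (g.α z) := by
  obtain ⟨hco, hcc, hsum⟩ := hθ
  obtain ⟨c1, c2, c3, c4⟩ := hcc
  have z1 : ∀ x : F, z * x = x * z := hzc.1
  have z2 : ∀ x y : F, z * (x * y) = (z * x) * y := hzc.2.1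
  have z3 : ∀ x y : F, x * (z * y) = (x * z) * y := hzc.2.2.1
  have z4 : ∀ x y : F, x * (y * z) = (x * y) * z := hzc.2.2.2
  have hz : g.α.symm (g.α z) = z := g.α.symm_apply_apply z
  have hco1 : ∀ x : F, θ 1 x = 0 := fun x => (hco x).1
  have hco2 : ∀ x : F, θ x 1 = 0 := fun x => (hco x).2
  refine ⟨fun x => ⟨?_, ?_⟩, ⟨fun x => ?_, fun x y => ?_, fun x y => ?_, fun x y => ?_⟩, ?_⟩
  · simp only [actC, g.symm_mul, g.symm_one, hco1, map_zero, g.τone, Loop.one_mul]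
    abel
  · simp only [actC, g.symm_mul, g.symm_one, hco2, map_zero, g.τone, Loop.mul_one]
    abel
  · simp only [actC, g.symm_mul, hz]
    rw [c1 (g.α.symm x), z1 (g.α.symm x)]
    abel
  · simp only [actC, g.symm_mul, hz]
    rw [z4 (g.α.symm x) (g.α.symm y)]
    have h := congrArg g.β (c2 (g.α.symm x) (g.α.symm y))
    rw [map_add, map_add] at h
    linear_combination h
  · simp only [actC, g.symm_mul, hz]
    rw [z3 (g.α.symm x) (g.α.symm y)]
    have h := congrArg g.β (c3 (g.α.symm x) (g.α.symm y))
    rw [map_add, map_add] at h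
    linear_combination h
  · simp only [actC, g.symm_mul, hz]
    rw [z2 (g.α.symm x) (g.α.symm y)]
    have h := congrArg g.β (c4 (g.α.symm x) (g.α.symm y))
    rw [map_add, map_add] at h
    linear_combination h
  · have hlp : ∀ i : ℕ, g.α.symm (lpow (fun x y : F => x * y) (g.α z) i) =
        lpow (fun x y : F => x * y) z i := by
      intro i
      induction i with
      | zero => exact hz
      | succ i ih =>
          show g.α.symm (lpow (fun x y : F => x * y) (g.α z) i * g.α z) = _
          rw [g.symm_mul, ih, hz]
          rfl
    have key : ∀ i : ℕ, actC θ g (lpow (fun x y : F => x * y) (g.α z) i) (g.α z) =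
        g.β (θ (lpow (fun x y : F => x * y) z i) z) +
          (g.τ (lpow (fun x y : F => x * y) z (i + 1)) -
            g.τ (lpow (fun x y : F => x * y) z i)) - g.τ z := by
      intro i
      simp only [actC, g.symm_mul, hlp, hz]
      show _ + g.τ (lpow (fun x y : F => x * y) z (i + 1)) - _ - _ = _
      abel
    rw [Finset.sum_congr rfl (fun i _ => key i), Finset.sum_sub_distrib,
      Finset.sum_add_distrib, ← map_sum, hsum, map_zero, Finset.sum_range_sub
        (f := fun i => g.τ (lpow (fun x y : F => x * y) z i)), hzp,
      Finset.sum_const, Finset.card_range]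
    show (0 : Fin d → ZMod p) + (g.τ 1 - g.τ z) - (p - 1) • g.τ z = 0
    rw [g.τone]
    have hps : ((p - 1) + 1) • g.τ z = 0 := by
      have h1 : p - 1 + 1 = p := by have := hp.pos; omega
      rw [h1]
      exact p_smul_eq_zero p d _
    rw [succ_nsmul] at hps
    have h2 : (p - 1) • g.τ z = - g.τ z := by
      linear_combination hps
    rw [h2]
    abel

lemma transfer {F : Type u} [Loop F] (p d : ℕ) (hp : p.Prime)
    {θ : F → F → (Fin d → ZMod p)} {w z : F}
    (hw : IsCentral (fun x y : F => x * y) w)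
    (hwp : lpow (fun x y : F => x * y) w (p - 1) = 1)
    (hθ : InCz p d θ w) {m : ℕ} (hm : lpow (fun x y : F => x * y) w m = z)
    (hzp : lpow (fun x y : F => x * y) z (p - 1) = 1) : InCz p d θ z := by
  obtain ⟨hco, hcc, hsum⟩ := hθ
  set M : F × (Fin d → ZMod p) → F × (Fin d → ZMod p) → F × (Fin d → ZMod p) :=
    cmul θ with hM
  set c : F × (Fin d → ZMod p) := (w, 0) with hcdef
  have hc : IsCentral M c := centralConds_to_pair hw hcc
  have hone : M (1, 0) (1, 0) = ((1 : F), (0 : Fin d → ZMod p)) := by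
    simp [hM, cmul, Loop.one_mul, (hco 1).1]
  have h1 : lpow M c (p - 1) = (1, 0) := by
    rw [hM, hcdef, lpow_cmul]
    simp [hwp, hsum]
  have hk : ∀ k : ℕ, lpow M c ((k + 1) * p - 1) = (1, 0) := by
    intro k
    induction k with
    | zero => simpa using h1
    | succ n ih =>
        have hq : 1 ≤ (n + 1) * p := Nat.mul_pos (Nat.succ_pos n) hp.pos
        have hpp := hp.pos
        have harith : (n + 1 + 1) * p - 1 = ((n + 1) * p - 1) + (p - 1) + 1 := by
          have h2 : (n + 1 + 1) * p = (n + 1) * p + p := by ring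
          omega
        rw [harith, ← lpow_add hc, ih, h1]
        exact hone
  set s : Fin d → ZMod p := (lpow M c m).2 with hs
  have hm2 : lpow M c m = (z, s) := by
    rw [Prod.ext_iff]
    refine ⟨?_, rfl⟩
    rw [hM, hcdef, lpow_cmul]
    exact hm
  have hzs_c : IsCentral M (z, s) := hm2 ▸ isCentral_lpow hc m
  have h1c : IsCentral M ((1 : F), -s) := one_pair_central hco (-s)
  have hprod : M (z, s) (1, -s) = (z, 0) := by
    simp [hM, cmul, Loop.mul_one, (hco z).2]
  have hz0 : IsCentral M ((z, 0) : F × (Fin d → ZMod p)) :=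
    hprod ▸ isCentral_mul hzs_c h1c
  have hccz : CentralConds θ z := pair_to_centralConds hz0
  have hbig : lpow M (z, s) (p - 1) = (1, 0) := by
    rw [← hm2, lpow_lpow hc]
    have harith : m * (p - 1) + m + (p - 1) = (m + 1) * p - 1 := by
      obtain ⟨q, rfl⟩ : ∃ q, p = q + 1 := ⟨p - 1, by have := hp.pos; omega⟩
      simp only [Nat.add_sub_cancel]
      ring_nf
      omega
    rw [harith]
    exact hk m
  have hsnd := congrArg Prod.snd hbig
  rw [hM, lpow_cmul] at hsnd
  simp only at hsnd
  have hps : (p - 1 + 1) • s = 0 := by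
    have h1 : p - 1 + 1 = p := by have := hp.pos; omega
    rw [h1]
    exact p_smul_eq_zero p d s
  rw [hps, zero_add] at hsnd
  exact ⟨hco, hccz, hsnd⟩

end Main


/-- The image of C(F,p^d,z) under the action of (α,β,τ) equals C(F,p^d,z^α);
in particular, the subgroup Aut*(F,p^d,z) = {(α,β,τ) : ⟨z^α⟩ = ⟨z⟩} acts on
C(F,p^d,z). -/
theorem stmt16 {F : Type u} [Loop F] [Fintype F] (p d : ℕ) (hp : p.Prime)
    (hd : 1 ≤ d) (z : F) (hz1 : z ≠ 1)
    (hzc : IsCentral (fun x y : F => x * y) z)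
    (hzp : lpow (fun x y : F => x * y) z (p - 1) = 1)
    (g : AutStar F (Fin d → ZMod p)) :
    ((fun θ => actC θ g) '' {θ : F → F → (Fin d → ZMod p) | InCz p d θ z} =
      {θ : F → F → (Fin d → ZMod p) | InCz p d θ (g.α z)}) ∧
    (genSet (g.α z) = genSet z →
      ∀ θ : F → F → (Fin d → ZMod p), InCz p d θ z → InCz p d (actC θ g) z) := by
  have hzc' : IsCentral (fun x y : F => x * y) (g.α z) := isCentral_map g.α g.mapMul hzc
  have hzp' : lpow (fun x y : F => x * y) (g.α z) (p - 1) = 1 := by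
    rw [lpow_map (m := fun x y : F => x * y) g.α g.mapMul, hzp, g.mapOne]
  constructor
  · apply subset_antisymm
    · rintro θ' ⟨θ, hθ, rfl⟩
      exact act_mem p d hp hzc hzp g hθ
    · intro θ' hθ'
      refine ⟨actC θ' g.inv, ?_, act_act_inv g θ'⟩
      have h := act_mem p d hp hzc' hzp' g.inv hθ'
      have he : g.inv.α (g.α z) = z := g.α.symm_apply_apply z
      rwa [he] at h
  · intro hgen θ hθ
    have h1 := act_mem p d hp hzc hzp g hθ
    have hzmem : z ∈ genSet (g.α z) := by
      rw [hgen]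
      exact Set.mem_insert_iff.mpr (Or.inr ⟨0, rfl⟩)
    rcases Set.mem_insert_iff.mp hzmem with h | ⟨m, hm⟩
    · exact absurd h hz1
    · exact transfer p d hp hzc' hzp' h1 hm hzp
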